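/- Let p, p′ ≥ 3 be odd integers such that the multiplicative order of 2 modulo p equals the multiplicative order of 2 modulo p′. Then for every f ∈ G: π_p(f(x)) = π_p(x) for every dyadic rational x with 0 < x < 1 if and only if π_{p′}(f(x)) = π_{p′}(x) for every dyadic rational x with 0 < x < 1. (The p-colorable subgroup F_p of Thompson's group F depends only on the multiplicative order of 2 modulo p; in particular F₅ = F₁₅.) -/

import Mathlib

/-- The function underlying the generator `f₀` of Thompson's group `F`:
the identity outside `[0,1]`; `2x` on `[0,1/4]`, `x + 1/4` on `[1/4,1/2]`,
`(x+1)/2` on `[1/2,1]`. -/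
noncomputable def f0fun : ℚ → ℚ := fun x =>
  if x < 0 then x
  else if 1 < x then x
  else if x ≤ 1 / 4 then 2 * x
  else if x ≤ 1 / 2 then x + 1 / 4
  else (x + 1) / 2

/-- The function underlying the generator `f₁` of Thompson's group `F`:
the identity outside `[0,1]`; `x` on `[0,1/2]`, `2x − 1/2` on `[1/2,5/8]`,
`x + 1/8` on `[5/8,3/4]`, `(x+1)/2` on `[3/4,1]`. -/
noncomputable def f1fun : ℚ → ℚ := fun x =>
  if x < 0 then x
  else if 1 < x then x
  else if x ≤ 1 / 2 then x
  else if x ≤ 5 / 8 then 2 * x - 1 / 2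
  else if x ≤ 3 / 4 then x + 1 / 8
  else (x + 1) / 2

/-- The realization `G ≤ Equiv.Perm ℚ` of Thompson's group `F`: the subgroup generated
by the permutations whose underlying functions are `f0fun` and `f1fun`. -/
noncomputable def thompsonF : Subgroup (Equiv.Perm ℚ) :=
  Subgroup.closure {g : Equiv.Perm ℚ | ⇑g = f0fun ∨ ⇑g = f1fun}

/-- A rational is dyadic if its (reduced) denominator is a power of two,
equivalently `2^n · x ∈ ℤ` for some `n`. -/
def IsDyadic (x : ℚ) : Prop := ∃ n : ℕ, x.den = 2 ^ n

/-- `π_p(a / 2^n) = a · (2⁻¹)^n ∈ ZMod p`, computed from the reduced fraction of `x`;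
for `p` odd this is the well-defined reduction of a dyadic rational modulo `p`. -/
def piP (p : ℕ) (x : ℚ) : ZMod p :=
  (x.num : ZMod p) * ((2 : ZMod p)⁻¹) ^ (padicValNat 2 x.den)

/-- `D_i = {x ∈ ℚ : 0 < x < 1, x dyadic, π_p(x) = i}`. -/
def DSet (p : ℕ) (i : ZMod p) : Set ℚ :=
  {x : ℚ | 0 < x ∧ x < 1 ∧ IsDyadic x ∧ piP p x = i}


lemma isDyadic_of {x : ℚ} (n : ℕ) (m : ℤ) (h : x * 2 ^ n = (m : ℚ)) : IsDyadic x := by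
  have hx : x = (m : ℚ) / 2 ^ n := by
    field_simp at h ⊢; linarith
  have hd : (x.den : ℤ) ∣ (2 ^ n : ℤ) := by
    rw [hx]
    have : ((m : ℚ) / 2 ^ n) = Rat.divInt m (2 ^ n) := by
      rw [Rat.divInt_eq_div]; push_cast; ring
    rw [this]
    exact_mod_cast Rat.den_dvd m (2 ^ n)
  have hd' : x.den ∣ 2 ^ n := by exact_mod_cast hd
  obtain ⟨j, _, hj⟩ := (Nat.dvd_prime_pow Nat.prime_two).mp hd'
  exact ⟨j, hj⟩

lemma IsDyadic.exists_int {x : ℚ} (hx : IsDyadic x) : ∃ (n : ℕ) (m : ℤ), x * 2 ^ n = (m : ℚ) := by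
  obtain ⟨n, hn⟩ := hx
  refine ⟨n, x.num, ?_⟩
  have h := Rat.mul_den_eq_num x
  rw [hn] at h
  exact_mod_cast h

lemma IsDyadic.add {x y : ℚ} (hx : IsDyadic x) (hy : IsDyadic y) : IsDyadic (x + y) := by
  obtain ⟨n, m, hm⟩ := hx.exists_int
  obtain ⟨n', m', hm'⟩ := hy.exists_int
  refine isDyadic_of (n + n') (m * 2 ^ n' + m' * 2 ^ n) ?_
  push_cast
  rw [pow_add]
  linear_combination (2:ℚ) ^ n' * hm + (2:ℚ) ^ n * hm'

lemma IsDyadic.neg {x : ℚ} (hx : IsDyadic x) : IsDyadic (-x) := by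
  obtain ⟨n, m, hm⟩ := hx.exists_int
  exact isDyadic_of n (-m) (by push_cast; linarith)

lemma IsDyadic.mul {x y : ℚ} (hx : IsDyadic x) (hy : IsDyadic y) : IsDyadic (x * y) := by
  obtain ⟨n, m, hm⟩ := hx.exists_int
  obtain ⟨n', m', hm'⟩ := hy.exists_int
  refine isDyadic_of (n + n') (m * m') ?_
  push_cast
  rw [pow_add]
  linear_combination (y * (2:ℚ) ^ n') * hm + ((m:ℚ)) * hm'

lemma isDyadic_zpow (k : ℤ) : IsDyadic ((2 : ℚ) ^ k) := by
  obtain ⟨a, rfl | rfl⟩ := Int.eq_nat_or_neg k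
  · exact isDyadic_of 0 (2 ^ a) (by push_cast; simp)
  · refine isDyadic_of a 1 ?_
    rw [zpow_neg, zpow_natCast]
    push_cast
    field_simp

lemma isDyadic_num (m : ℤ) : IsDyadic ((m : ℚ)) := isDyadic_of 0 m (by push_cast; ring)

lemma piP_eq (p : ℕ) (hp2 : (2 : ZMod p) * (2 : ZMod p)⁻¹ = 1) {x : ℚ} {n : ℕ} {m : ℤ}
    (h : x * 2 ^ n = (m : ℚ)) : piP p x = (m : ZMod p) * ((2 : ZMod p)⁻¹) ^ n := by
  obtain ⟨j, hj⟩ := isDyadic_of n m h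
  have hkey : x.num * 2 ^ n = m * (x.den : ℤ) := by
    have h2 : (x.num : ℚ) * 2 ^ n = (m : ℚ) * (x.den : ℚ) := by
      have hden : (x.den : ℚ) ≠ 0 := by exact_mod_cast x.den_nz
      rw [← Rat.num_div_den x] at h
      field_simp at h
      linarith
    exact_mod_cast h2
  have hv : padicValNat 2 x.den = j := by rw [hj]; simp [padicValNat.prime_pow]
  have hz : (x.num : ZMod p) * 2 ^ n = (m : ZMod p) * 2 ^ j := by
    have := congrArg (fun t : ℤ => (t : ZMod p)) hkey
    push_cast at this
    rw [hj] at this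
    push_cast at this
    exact this
  have hpow : ∀ a : ℕ, (2 : ZMod p) ^ a * ((2 : ZMod p)⁻¹) ^ a = 1 := fun a => by
    rw [← mul_pow, hp2, one_pow]
  unfold piP
  rw [hv]
  calc (x.num : ZMod p) * ((2 : ZMod p)⁻¹) ^ j
      = ((x.num : ZMod p) * 2 ^ n) * (((2:ZMod p)⁻¹) ^ n * ((2:ZMod p)⁻¹) ^ j) := by
        rw [show (x.num : ZMod p) * 2 ^ n * (((2:ZMod p)⁻¹) ^ n * ((2:ZMod p)⁻¹) ^ j)
          = ((2:ZMod p) ^ n * ((2:ZMod p)⁻¹) ^ n) * ((x.num : ZMod p) * ((2:ZMod p)⁻¹) ^ j) by ring,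
          hpow, one_mul]
    _ = ((m : ZMod p) * 2 ^ j) * (((2:ZMod p)⁻¹) ^ n * ((2:ZMod p)⁻¹) ^ j) := by rw [hz]
    _ = ((2:ZMod p) ^ j * ((2:ZMod p)⁻¹) ^ j) * ((m : ZMod p) * ((2:ZMod p)⁻¹) ^ n) := by ring
    _ = (m : ZMod p) * ((2:ZMod p)⁻¹) ^ n := by rw [hpow, one_mul]

lemma piP_add (p : ℕ) (hp2 : (2 : ZMod p) * (2 : ZMod p)⁻¹ = 1) {x y : ℚ}
    (hx : IsDyadic x) (hy : IsDyadic y) : piP p (x + y) = piP p x + piP p y := by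
  obtain ⟨n, m, hm⟩ := hx.exists_int
  obtain ⟨n', m', hm'⟩ := hy.exists_int
  have hsum : (x + y) * 2 ^ (n + n') = ((m * 2 ^ n' + m' * 2 ^ n : ℤ) : ℚ) := by
    push_cast; rw [pow_add]; linear_combination (2:ℚ) ^ n' * hm + (2:ℚ) ^ n * hm'
  rw [piP_eq p hp2 hsum, piP_eq p hp2 hm, piP_eq p hp2 hm']
  have hpow : ∀ a : ℕ, (2 : ZMod p) ^ a * ((2 : ZMod p)⁻¹) ^ a = 1 := fun a => by
    rw [← mul_pow, hp2, one_pow]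
  push_cast
  rw [pow_add]
  calc ((m : ZMod p) * 2 ^ n' + (m' : ZMod p) * 2 ^ n) * (((2:ZMod p)⁻¹) ^ n * ((2:ZMod p)⁻¹) ^ n')
      = ((2:ZMod p) ^ n' * ((2:ZMod p)⁻¹) ^ n') * ((m:ZMod p) * ((2:ZMod p)⁻¹) ^ n)
        + ((2:ZMod p) ^ n * ((2:ZMod p)⁻¹) ^ n) * ((m':ZMod p) * ((2:ZMod p)⁻¹) ^ n') := by ring
    _ = (m:ZMod p) * ((2:ZMod p)⁻¹) ^ n + (m':ZMod p) * ((2:ZMod p)⁻¹) ^ n' := by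
        rw [hpow, hpow, one_mul, one_mul]

lemma piP_zpow (p : ℕ) (U : (ZMod p)ˣ) (hU : (U : ZMod p) = 2)
    (hp2 : (2 : ZMod p) * (2 : ZMod p)⁻¹ = 1) {x : ℚ} (hx : IsDyadic x) (k : ℤ) :
    piP p ((2 : ℚ) ^ k * x) = ((U ^ k : (ZMod p)ˣ) : ZMod p) * piP p x := by
  obtain ⟨n, m, hm⟩ := hx.exists_int
  have hinv : ((U⁻¹ : (ZMod p)ˣ) : ZMod p) = (2 : ZMod p)⁻¹ := by
    rw [← hU, ← ZMod.inv_coe_unit]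
  obtain ⟨a, rfl | rfl⟩ := Int.eq_nat_or_neg k
  · have h1 : ((2:ℚ) ^ (a:ℤ) * x) * 2 ^ n = ((2 ^ a * m : ℤ) : ℚ) := by
      rw [zpow_natCast]; push_cast; linear_combination (2:ℚ) ^ a * hm
    rw [piP_eq p hp2 h1, piP_eq p hp2 hm]
    have : ((U ^ (a:ℤ) : (ZMod p)ˣ) : ZMod p) = (2 : ZMod p) ^ a := by
      rw [zpow_natCast, ← hU]; push_cast; ring
    rw [this]; push_cast; ring
  · have h1 : ((2:ℚ) ^ (-(a:ℤ)) * x) * 2 ^ (n + a) = ((m : ℤ) : ℚ) := by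
      rw [zpow_neg, zpow_natCast, pow_add]
      have : (2:ℚ) ^ a ≠ 0 := by positivity
      field_simp
      linear_combination hm
    rw [piP_eq p hp2 h1, piP_eq p hp2 hm]
    have : ((U ^ (-(a:ℤ)) : (ZMod p)ˣ) : ZMod p) = ((2:ZMod p)⁻¹) ^ a := by
      rw [zpow_neg, zpow_natCast, ← inv_pow, ← hinv]; push_cast; ring
    rw [this, pow_add]; ring

def LinOn (f : ℚ → ℚ) (x y : ℚ) (k : ℤ) (b : ℚ) : Prop :=
  ∀ z, x ≤ z → z ≤ y → f z = 2 ^ k * z + b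

def Good (f : Equiv.Perm ℚ) : Prop :=
  StrictMono f ∧ (∀ x : ℚ, x ≤ 0 → f x = x) ∧ (∀ x : ℚ, 1 ≤ x → f x = x) ∧
  (∀ x, IsDyadic x → IsDyadic (f x)) ∧ (∀ x, IsDyadic (f x) → IsDyadic x) ∧
  ∃ B : Finset ℚ, (∀ c ∈ B, IsDyadic c) ∧
    ∀ x y : ℚ, 0 ≤ x → y ≤ 1 → x < y → (∀ c ∈ B, ¬(x < c ∧ c < y)) →
      ∃ k b, IsDyadic b ∧ LinOn f x y k b

lemma Good.map_zero {f : Equiv.Perm ℚ} (h : Good f) : f 0 = 0 := h.2.1 0 le_rfl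

lemma Good.map_one {f : Equiv.Perm ℚ} (h : Good f) : f 1 = 1 := h.2.2.1 1 le_rfl

lemma Good.nonneg {f : Equiv.Perm ℚ} (h : Good f) {x : ℚ} (hx : 0 ≤ x) : 0 ≤ f x := by
  rcases eq_or_lt_of_le hx with rfl | hlt
  · rw [h.map_zero]
  · exact le_of_lt (h.map_zero ▸ h.1 hlt)

lemma Good.le_one {f : Equiv.Perm ℚ} (h : Good f) {x : ℚ} (hx : x ≤ 1) : f x ≤ 1 := by
  rcases eq_or_lt_of_le hx with rfl | hlt
  · rw [h.map_one]
  · exact le_of_lt (h.map_one ▸ h.1 hlt)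

lemma Good.symm_strictMono {f : Equiv.Perm ℚ} (h : Good f) : StrictMono ⇑f.symm := by
  intro a b hab
  exact h.1.lt_iff_lt.mp (by simpa using hab)

lemma good_one : Good 1 := by
  refine ⟨fun a b hab => by simpa using hab, fun x _ => rfl, fun x _ => rfl,
    fun x hx => hx, fun x hx => hx, ∅, by simp, ?_⟩
  intro x y _ _ _ _
  exact ⟨0, 0, isDyadic_of 0 0 (by norm_num), fun z _ _ => by norm_num⟩

lemma good_mul {f g : Equiv.Perm ℚ} (hf : Good f) (hg : Good g) : Good (f * g) := by
  obtain ⟨Bf, hBf, hLf⟩ := hf.2.2.2.2.2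
  obtain ⟨Bg, hBg, hLg⟩ := hg.2.2.2.2.2
  classical
  refine ⟨fun a b hab => hf.1 (hg.1 hab),
    fun x hx => by simp [Equiv.Perm.mul_apply, hg.2.1 x hx, hf.2.1 x hx],
    fun x hx => by simp [Equiv.Perm.mul_apply, hg.2.2.1 x hx, hf.2.2.1 x hx],
    fun x hx => hf.2.2.2.1 _ (hg.2.2.2.1 x hx),
    fun x hx => hg.2.2.2.2.1 x (hf.2.2.2.2.1 (g x) hx),
    Bg ∪ Bf.image ⇑g.symm, ?_, ?_⟩
  · intro c hc
    rcases Finset.mem_union.mp hc with hc | hc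
    · exact hBg c hc
    · obtain ⟨c', hc', rfl⟩ := Finset.mem_image.mp hc
      refine hg.2.2.2.2.1 _ ?_
      rw [Equiv.apply_symm_apply]
      exact hBf c' hc'
  · intro x y hx0 hy1 hxy hnb
    obtain ⟨j, c, hcdy, hjc⟩ := hLg x y hx0 hy1 hxy
      (fun c hc => hnb c (Finset.mem_union_left _ hc))
    have hgx0 : 0 ≤ g x := hg.nonneg hx0
    have hgy1 : g y ≤ 1 := hg.le_one hy1
    have hgxy : g x < g y := hg.1 hxy
    have hnb' : ∀ d ∈ Bf, ¬(g x < d ∧ d < g y) := by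
      intro d hd hdbet
      refine hnb (g.symm d) (Finset.mem_union_right _ (Finset.mem_image_of_mem _ hd)) ?_
      constructor
      · have := hg.symm_strictMono hdbet.1
        simpa using this
      · have := hg.symm_strictMono hdbet.2
        simpa using this
    obtain ⟨k, b, hbdy, hkb⟩ := hLf (g x) (g y) hgx0 hgy1 hgxy hnb'
    refine ⟨k + j, 2 ^ k * c + b, (((isDyadic_zpow k).mul hcdy).add hbdy), ?_⟩
    intro z hz1 hz2
    have hgz1 : g x ≤ g z := (hg.1.le_iff_le).mpr hz1
    have hgz2 : g z ≤ g y := (hg.1.le_iff_le).mpr hz2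
    have := hkb (g z) hgz1 hgz2
    rw [Equiv.Perm.mul_apply, this, hjc z hz1 hz2, zpow_add₀ (by norm_num : (2:ℚ) ≠ 0)]
    ring

lemma good_inv {f : Equiv.Perm ℚ} (hf : Good f) : Good f⁻¹ := by
  obtain ⟨Bf, hBf, hLf⟩ := hf.2.2.2.2.2
  classical
  have hsymm : ⇑f⁻¹ = ⇑f.symm := rfl
  refine ⟨by rw [hsymm]; exact hf.symm_strictMono, ?_, ?_, ?_, ?_, Bf.image ⇑f, ?_, ?_⟩
  · intro x hx
    rw [hsymm]
    exact f.symm_apply_eq.mpr (hf.2.1 x hx).symm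
  · intro x hx
    rw [hsymm]
    exact f.symm_apply_eq.mpr (hf.2.2.1 x hx).symm
  · intro x hx
    rw [hsymm]
    refine hf.2.2.2.2.1 (f.symm x) ?_
    rwa [Equiv.apply_symm_apply]
  · intro x hx
    rw [hsymm] at hx
    have := hf.2.2.2.1 _ hx
    rwa [Equiv.apply_symm_apply] at this
  · intro c hc
    obtain ⟨c', hc', rfl⟩ := Finset.mem_image.mp hc
    exact hf.2.2.2.1 c' (hBf c' hc')
  · intro x y hx0 hy1 hxy hnb
    have hx' : f.symm 0 ≤ f.symm x := (hf.symm_strictMono.le_iff_le).mpr hx0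
    rw [f.symm_apply_eq.mpr hf.map_zero.symm] at hx'
    have hy' : f.symm y ≤ f.symm 1 := (hf.symm_strictMono.le_iff_le).mpr hy1
    rw [f.symm_apply_eq.mpr hf.map_one.symm] at hy'
    have hxy' : f.symm x < f.symm y := hf.symm_strictMono hxy
    have hnb' : ∀ d ∈ Bf, ¬(f.symm x < d ∧ d < f.symm y) := by
      intro d hd hdbet
      refine hnb (f d) (Finset.mem_image_of_mem _ hd) ?_
      constructor
      · have := hf.1 hdbet.1
        rwa [Equiv.apply_symm_apply] at this
      · have := hf.1 hdbet.2
        rwa [Equiv.apply_symm_apply] at this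
    obtain ⟨k, b, hbdy, hkb⟩ := hLf (f.symm x) (f.symm y) hx' hy' hxy' hnb'
    refine ⟨-k, -(2 ^ (-k) * b), ((isDyadic_zpow (-k)).mul hbdy).neg, ?_⟩
    intro z hz1 hz2
    have h1 : f.symm x ≤ f.symm z := (hf.symm_strictMono.le_iff_le).mpr hz1
    have h2 : f.symm z ≤ f.symm y := (hf.symm_strictMono.le_iff_le).mpr hz2
    have heq := hkb (f.symm z) h1 h2
    rw [Equiv.apply_symm_apply] at heq
    have h2k : (2:ℚ) ^ (-k) * (2:ℚ) ^ k = 1 := by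
      rw [← zpow_add₀ (by norm_num : (2:ℚ) ≠ 0)]; norm_num
    rw [hsymm]
    linear_combination (-(2:ℚ)^(-k)) * heq + (-(f.symm z)) * h2k

lemma isDyadic_const (m : ℤ) (n : ℕ) : IsDyadic ((m : ℚ) / 2 ^ n) :=
  isDyadic_of n m (by field_simp)

lemma f0_strictMono : StrictMono f0fun := by
  intro a b hab
  simp only [f0fun]
  split_ifs <;> linarith

lemma f1_strictMono : StrictMono f1fun := by
  intro a b hab
  simp only [f1fun]
  split_ifs <;> linarith

lemma good_f0 (g : Equiv.Perm ℚ) (hg : ⇑g = f0fun) : Good g := by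
  classical
  have hq : IsDyadic (1/4 : ℚ) := by
    have := isDyadic_const 1 2; norm_num at this ⊢; exact this
  have hh : IsDyadic (1/2 : ℚ) := by
    have := isDyadic_const 1 1; norm_num at this ⊢; exact this
  have h1 : IsDyadic (1 : ℚ) := by
    have := isDyadic_const 1 0; norm_num at this ⊢; exact this
  have h2 : IsDyadic (2 : ℚ) := isDyadic_of 0 2 (by norm_num)
  refine ⟨by rw [hg]; exact f0_strictMono, ?_, ?_, ?_, ?_, ({1/4, 1/2} : Finset ℚ), ?_, ?_⟩
  · intro x hx; rw [hg]; simp only [f0fun]; split_ifs <;> linarith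
  · intro x hx; rw [hg]; simp only [f0fun]; split_ifs <;> linarith
  · intro x hx
    rw [hg]; simp only [f0fun]; split_ifs
    · exact hx
    · exact hx
    · exact h2.mul hx
    · exact hx.add hq
    · have : (x+1)/2 = 1/2 * (x + 1) := by ring
      rw [this]
      exact hh.mul (hx.add h1)
  · intro x hx
    rw [hg] at hx; simp only [f0fun] at hx; split_ifs at hx
    · exact hx
    · exact hx
    · have : x = 1/2 * (2 * x) := by ring
      rw [this]; exact hh.mul hx
    · have : x = (x + 1/4) + (-(1/4)) := by ring
      rw [this]; exact hx.add hq.neg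
    · have : x = 2 * ((x+1)/2) + (-1) := by ring
      rw [this]; exact (h2.mul hx).add h1.neg
  · intro c hc
    simp only [Finset.mem_insert, Finset.mem_singleton] at hc
    rcases hc with rfl | rfl
    · exact hq
    · exact hh
  · intro x y hx0 hy1 hxy hnb
    have hb1 := hnb (1/4) (by simp)
    have hb2 := hnb (1/2) (by simp)
    by_cases hc1 : y ≤ 1/4
    · refine ⟨1, 0, isDyadic_of 0 0 (by norm_num), fun z hz1 hz2 => ?_⟩
      rw [hg]; simp only [f0fun]; split_ifs <;>
        simp only [zpow_neg, zpow_one, zpow_zero, one_mul] <;> linarith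
    · have hx1 : 1/4 ≤ x := by
        by_contra hcon
        exact hb1 ⟨by linarith, by linarith⟩
      by_cases hc2 : y ≤ 1/2
      · refine ⟨0, 1/4, hq, fun z hz1 hz2 => ?_⟩
        rw [hg]; simp only [f0fun]; split_ifs <;>
          simp only [zpow_neg, zpow_one, zpow_zero, one_mul] <;> linarith
      · have hx2 : 1/2 ≤ x := by
          by_contra hcon
          exact hb2 ⟨by linarith, by linarith⟩
        refine ⟨-1, 1/2, hh, fun z hz1 hz2 => ?_⟩
        rw [hg]; simp only [f0fun]; split_ifs <;>
          simp only [zpow_neg, zpow_one, zpow_zero, one_mul] <;> linarith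

lemma good_f1 (g : Equiv.Perm ℚ) (hg : ⇑g = f1fun) : Good g := by
  classical
  have he : IsDyadic (1/8 : ℚ) := by
    have := isDyadic_const 1 3; norm_num at this ⊢; exact this
  have hq : IsDyadic (1/4 : ℚ) := by
    have := isDyadic_const 1 2; norm_num at this ⊢; exact this
  have hf8 : IsDyadic (5/8 : ℚ) := by
    have := isDyadic_const 5 3; norm_num at this ⊢; exact this
  have ht : IsDyadic (3/4 : ℚ) := by
    have := isDyadic_const 3 2; norm_num at this ⊢; exact this
  have hh : IsDyadic (1/2 : ℚ) := by
    have := isDyadic_const 1 1; norm_num at this ⊢; exact this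
  have h1 : IsDyadic (1 : ℚ) := by
    have := isDyadic_const 1 0; norm_num at this ⊢; exact this
  have h2 : IsDyadic (2 : ℚ) := isDyadic_of 0 2 (by norm_num)
  refine ⟨by rw [hg]; exact f1_strictMono, ?_, ?_, ?_, ?_,
    ({1/2, 5/8, 3/4} : Finset ℚ), ?_, ?_⟩
  · intro x hx; rw [hg]; simp only [f1fun]; split_ifs <;> linarith
  · intro x hx; rw [hg]; simp only [f1fun]; split_ifs <;> linarith
  · intro x hx
    rw [hg]; simp only [f1fun]; split_ifs
    · exact hx
    · exact hx
    · exact hx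
    · have : 2 * x - 1/2 = 2 * x + (-(1/2)) := by ring
      rw [this]; exact (h2.mul hx).add hh.neg
    · exact hx.add he
    · have : (x+1)/2 = 1/2 * (x + 1) := by ring
      rw [this]
      exact hh.mul (hx.add h1)
  · intro x hx
    rw [hg] at hx; simp only [f1fun] at hx; split_ifs at hx
    · exact hx
    · exact hx
    · exact hx
    · have : x = 1/2 * (2 * x - 1/2) + 1/4 := by ring
      rw [this]
      exact (hh.mul hx).add hq
    · have : x = (x + 1/8) + (-(1/8)) := by ring
      rw [this]; exact hx.add he.neg
    · have : x = 2 * ((x+1)/2) + (-1) := by ring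
      rw [this]; exact (h2.mul hx).add h1.neg
  · intro c hc
    simp only [Finset.mem_insert, Finset.mem_singleton] at hc
    rcases hc with rfl | rfl | rfl
    · exact hh
    · exact hf8
    · exact ht
  · intro x y hx0 hy1 hxy hnb
    have hb1 := hnb (1/2) (by simp)
    have hb2 := hnb (5/8) (by simp)
    have hb3 := hnb (3/4) (by simp)
    by_cases hc1 : y ≤ 1/2
    · refine ⟨0, 0, isDyadic_of 0 0 (by norm_num), fun z hz1 hz2 => ?_⟩
      rw [hg]; simp only [f1fun]; split_ifs <;>
        simp only [zpow_neg, zpow_one, zpow_zero, one_mul] <;> linarith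
    · have hx1 : 1/2 ≤ x := by
        by_contra hcon
        exact hb1 ⟨by linarith, by linarith⟩
      by_cases hc2 : y ≤ 5/8
      · refine ⟨1, -(1/2), hh.neg, fun z hz1 hz2 => ?_⟩
        rw [hg]; simp only [f1fun]; split_ifs <;>
          simp only [zpow_neg, zpow_one, zpow_zero, one_mul] <;> linarith
      · have hx2 : 5/8 ≤ x := by
          by_contra hcon
          exact hb2 ⟨by linarith, by linarith⟩
        by_cases hc3 : y ≤ 3/4
        · refine ⟨0, 1/8, he, fun z hz1 hz2 => ?_⟩
          rw [hg]; simp only [f1fun]; split_ifs <;>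
            simp only [zpow_neg, zpow_one, zpow_zero, one_mul] <;> linarith
        · have hx3 : 3/4 ≤ x := by
            by_contra hcon
            exact hb3 ⟨by linarith, by linarith⟩
          refine ⟨-1, 1/2, hh, fun z hz1 hz2 => ?_⟩
          rw [hg]; simp only [f1fun]; split_ifs <;>
            simp only [zpow_neg, zpow_one, zpow_zero, one_mul] <;> linarith

def SlopeCond (f : Equiv.Perm ℚ) (d : ℕ) : Prop :=
  ∀ x y : ℚ, 0 ≤ x → y ≤ 1 → x < y → ∀ k : ℤ, ∀ b : ℚ,
    LinOn (⇑f) x y k b → (d : ℤ) ∣ k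

lemma main_equiv (p : ℕ) (hodd : Odd p) (f : Equiv.Perm ℚ) (hG : Good f) :
    (∀ x : ℚ, IsDyadic x → 0 < x → x < 1 → piP p (f x) = piP p x) ↔
      SlopeCond f (orderOf (2 : ZMod p)) := by
  classical
  have hcop : Nat.Coprime 2 p := hodd.coprime_two_left
  set U : (ZMod p)ˣ := ZMod.unitOfCoprime 2 hcop with hUdef
  have hU : (U : ZMod p) = 2 := by
    rw [hUdef, ZMod.coe_unitOfCoprime]; norm_num
  have hp2 : (2 : ZMod p) * (2 : ZMod p)⁻¹ = 1 := ZMod.mul_inv_of_unit _ ⟨U, hU⟩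
  have hordU : orderOf U = orderOf (2 : ZMod p) := by rw [← hU, orderOf_units]
  constructor
  · -- preservation → slope condition
    intro hC x y hx0 hy1 hxy k b hLin
    obtain ⟨N, hN⟩ := pow_unbounded_of_one_lt (R := ℚ) (3 / (y - x)) one_lt_two
    have h2N : (0:ℚ) < 2 ^ N := by positivity
    have hyx : (0:ℚ) < y - x := by linarith
    have h3 : 3 < (y - x) * 2 ^ N := by
      rw [div_lt_iff₀ hyx] at hN; linarith
    set m : ℤ := ⌊x * 2 ^ N⌋ + 1 with hm
    have hmQ : (m : ℚ) = ((⌊x * 2 ^ N⌋ : ℤ) : ℚ) + 1 := by rw [hm]; push_cast; ring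
    set z1 : ℚ := (m : ℚ) / 2 ^ N with hz1def
    set z2 : ℚ := z1 + 1 / 2 ^ N with hz2def
    have hz1int : z1 * 2 ^ N = (m : ℚ) := by rw [hz1def]; field_simp
    have h1N : (1:ℚ) / 2 ^ N * 2 ^ N = 1 := by field_simp
    have hz2int : z2 * 2 ^ N = (m : ℚ) + 1 := by
      rw [hz2def]; linear_combination hz1int + h1N
    have hfloor1 : x * 2 ^ N < (m : ℚ) := by
      rw [hmQ]; exact_mod_cast Int.lt_floor_add_one (x * 2 ^ N)
    have hfloor2 : (m : ℚ) ≤ x * 2 ^ N + 1 := by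
      rw [hmQ]
      have := Int.floor_le (x * 2 ^ N)
      linarith
    have hxz1 : x < z1 := (mul_lt_mul_iff_of_pos_right h2N).mp (by rw [hz1int]; exact hfloor1)
    have hz12 : z1 < z2 := by
      rw [hz2def]
      have : (0:ℚ) < 1 / 2 ^ N := by positivity
      linarith
    have hz2y : z2 < y := by
      refine (mul_lt_mul_iff_of_pos_right h2N).mp ?_
      rw [hz2int]
      nlinarith [hfloor2, h3]
    have hz1dy : IsDyadic z1 := isDyadic_of N m hz1int
    have hz2dy : IsDyadic z2 := isDyadic_of N (m + 1) (by push_cast; rw [hz2int])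
    have hz10 : 0 < z1 := lt_of_le_of_lt hx0 hxz1
    have hz11 : z1 < 1 := lt_of_lt_of_le (hz12.trans hz2y) hy1
    have hz20 : 0 < z2 := hz10.trans hz12
    have hz21 : z2 < 1 := lt_of_lt_of_le hz2y hy1
    have hfz1 : f z1 = 2 ^ k * z1 + b := hLin z1 hxz1.le (hz12.trans hz2y).le
    have hfz2 : f z2 = 2 ^ k * z2 + b := hLin z2 (hxz1.trans hz12).le hz2y.le
    have hbdy : IsDyadic b := by
      have hb : b = f z1 + (-(2 ^ k * z1)) := by rw [hfz1]; ring
      rw [hb]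
      exact (hG.2.2.2.1 z1 hz1dy).add ((isDyadic_zpow k).mul hz1dy).neg
    have h1 := hC z1 hz1dy hz10 hz11
    have h2 := hC z2 hz2dy hz20 hz21
    rw [hfz1, piP_add p hp2 ((isDyadic_zpow k).mul hz1dy) hbdy,
      piP_zpow p U hU hp2 hz1dy k] at h1
    rw [hfz2, piP_add p hp2 ((isDyadic_zpow k).mul hz2dy) hbdy,
      piP_zpow p U hU hp2 hz2dy k] at h2
    have hπ2 : piP p z2 = piP p z1 + ((2 : ZMod p)⁻¹) ^ N := by
      have hdyN : IsDyadic ((1:ℚ) / 2 ^ N) := isDyadic_of N 1 (by push_cast; exact h1N)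
      have hπN : piP p ((1:ℚ) / 2 ^ N) = ((2 : ZMod p)⁻¹) ^ N := by
        have := piP_eq p hp2 (x := (1:ℚ) / 2 ^ N) (n := N) (m := 1)
          (by push_cast; exact h1N)
        simpa using this
      rw [hz2def, piP_add p hp2 hz1dy hdyN, hπN]
    have e1 : ((U ^ k : (ZMod p)ˣ) : ZMod p) * ((2 : ZMod p)⁻¹) ^ N = ((2 : ZMod p)⁻¹) ^ N := by
      linear_combination h2 - h1 - (((U ^ k : (ZMod p)ˣ) : ZMod p) - 1) * hπ2
    have hNN : ((2 : ZMod p)⁻¹) ^ N * (2 : ZMod p) ^ N = 1 := by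
      rw [← mul_pow, mul_comm, hp2, one_pow]
    have hcoe : ((U ^ k : (ZMod p)ˣ) : ZMod p) = 1 := by
      calc ((U ^ k : (ZMod p)ˣ) : ZMod p)
          = ((U ^ k : (ZMod p)ˣ) : ZMod p) * (((2 : ZMod p)⁻¹) ^ N * (2 : ZMod p) ^ N) := by
            rw [hNN, mul_one]
        _ = (((U ^ k : (ZMod p)ˣ) : ZMod p) * ((2 : ZMod p)⁻¹) ^ N) * (2 : ZMod p) ^ N := by ring
        _ = ((2 : ZMod p)⁻¹) ^ N * (2 : ZMod p) ^ N := by rw [e1]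
        _ = 1 := hNN
    have hUk : U ^ k = 1 := Units.ext (by simpa using hcoe)
    rw [← hordU]
    exact orderOf_dvd_iff_zpow_eq_one.mpr hUk
  · -- slope condition → preservation
    intro hS
    obtain ⟨B, hBdy, hB⟩ := hG.2.2.2.2.2
    have step : ∀ t z : ℚ, IsDyadic t → 0 ≤ t → t < z → z < 1 → IsDyadic z →
        piP p (f t) = piP p t → (∀ c ∈ B, ¬(t < c ∧ c < z)) → piP p (f z) = piP p z := by
      intro t z htdy ht0 htz hz1 hzdy hπt hnb
      obtain ⟨k, b, hbdy, hLin⟩ := hB t z ht0 hz1.le htz hnb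
      have hk : ((orderOf (2 : ZMod p) : ℕ) : ℤ) ∣ k := hS t z ht0 hz1.le htz k b hLin
      have hUk : ((U ^ k : (ZMod p)ˣ) : ZMod p) = 1 := by
        have h : U ^ k = 1 := orderOf_dvd_iff_zpow_eq_one.mp (by rw [hordU]; exact_mod_cast hk)
        rw [h, Units.val_one]
      have hft : f t = 2 ^ k * t + b := hLin t le_rfl htz.le
      have hfz : f z = 2 ^ k * z + b := hLin z htz.le le_rfl
      have hπb : piP p b = 0 := by
        have h := hπt
        rw [hft, piP_add p hp2 ((isDyadic_zpow k).mul htdy) hbdy,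
          piP_zpow p U hU hp2 htdy k, hUk, one_mul] at h
        linear_combination h
      rw [hfz, piP_add p hp2 ((isDyadic_zpow k).mul hzdy) hbdy,
        piP_zpow p U hU hp2 hzdy k, hUk, one_mul, hπb, add_zero]
    have key : ∀ n : ℕ, ∀ z : ℚ, IsDyadic z → 0 < z → z < 1 →
        (B.filter (fun c => 0 < c ∧ c < z)).card ≤ n → piP p (f z) = piP p z := by
      intro n
      induction n with
      | zero =>
        intro z hzdy hz0 hz1 hcard
        have hemp : B.filter (fun c => 0 < c ∧ c < z) = ∅ := Finset.card_eq_zero.mp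
          (le_antisymm hcard (Nat.zero_le _))
        refine step 0 z (isDyadic_of 0 0 (by norm_num)) le_rfl hz0 hz1 hzdy
          (by rw [hG.map_zero]) ?_
        intro c hc hcc
        have : c ∈ B.filter (fun c => 0 < c ∧ c < z) := Finset.mem_filter.mpr ⟨hc, hcc⟩
        rw [hemp] at this
        exact absurd this (Finset.notMem_empty c)
      | succ n ih =>
        intro z hzdy hz0 hz1 hcard
        set s := B.filter (fun c => 0 < c ∧ c < z) with hs
        rcases s.eq_empty_or_nonempty with hemp | hne
        · refine step 0 z (isDyadic_of 0 0 (by norm_num)) le_rfl hz0 hz1 hzdy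
            (by rw [hG.map_zero]) ?_
          intro c hc hcc
          have : c ∈ s := Finset.mem_filter.mpr ⟨hc, hcc⟩
          rw [hemp] at this
          exact absurd this (Finset.notMem_empty c)
        · set t := s.max' hne with ht
          have htmem : t ∈ s := s.max'_mem hne
          obtain ⟨htB, ht0, htz⟩ : t ∈ B ∧ 0 < t ∧ t < z := by
            have := Finset.mem_filter.mp htmem
            exact ⟨this.1, this.2.1, this.2.2⟩
          have hnb2 : ∀ c ∈ B, ¬(t < c ∧ c < z) := by
            intro c hc hcc
            have hcs : c ∈ s := Finset.mem_filter.mpr ⟨hc, ht0.trans hcc.1, hcc.2⟩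
            exact absurd (s.le_max' c hcs) (not_le.mpr hcc.1)
          have hsub : B.filter (fun c => 0 < c ∧ c < t) ⊆ s.erase t := by
            intro c hc
            obtain ⟨hc1, hc2, hc3⟩ : c ∈ B ∧ 0 < c ∧ c < t := by
              have := Finset.mem_filter.mp hc
              exact ⟨this.1, this.2.1, this.2.2⟩
            exact Finset.mem_erase.mpr ⟨ne_of_lt hc3,
              Finset.mem_filter.mpr ⟨hc1, hc2, hc3.trans htz⟩⟩
          have hcardt : (B.filter (fun c => 0 < c ∧ c < t)).card ≤ n := by
            have h1 := Finset.card_le_card hsub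
            have h2 := Finset.card_erase_of_mem htmem
            have h3 : 1 ≤ s.card := Finset.card_pos.mpr hne
            omega
          have hπt := ih t (hBdy t htB) ht0 (htz.trans hz1) hcardt
          exact step t z (hBdy t htB) ht0.le htz hz1 hzdy hπt hnb2
    intro x hxdy hx0 hx1
    exact key B.card x hxdy hx0 hx1 (Finset.card_filter_le _ _)


/-- Let `p, p′ ≥ 3` be odd integers with the same multiplicative order of `2`.  Then an
element `f` of Thompson's group `G` preserves all residues `π_p` of dyadic rationals in
`(0,1)` iff it preserves all residues `π_{p′}`: the `p`-colorable subgroup depends only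
on the multiplicative order of `2` modulo `p`. -/
theorem pColorable_depends_only_on_order (p p' : ℕ) (hp3 : 3 ≤ p) (hodd : Odd p)
    (hp3' : 3 ≤ p') (hodd' : Odd p')
    (horder : orderOf (2 : ZMod p) = orderOf (2 : ZMod p'))
    (f : Equiv.Perm ℚ) (hf : f ∈ thompsonF) :
    (∀ x : ℚ, IsDyadic x → 0 < x → x < 1 → piP p (f x) = piP p x) ↔
      (∀ x : ℚ, IsDyadic x → 0 < x → x < 1 → piP p' (f x) = piP p' x) := by

  have hf' : f ∈ Subgroup.closure {g : Equiv.Perm ℚ | ⇑g = f0fun ∨ ⇑g = f1fun} := hf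
  have hGood : Good f := by
    refine Subgroup.closure_induction ?_ good_one
      (fun a b _ _ ha hb => good_mul ha hb) (fun a _ ha => good_inv ha) hf'
    intro g hgmem
    rcases hgmem with h | h
    · exact good_f0 g h
    · exact good_f1 g h
  rw [main_equiv p hodd f hGood, main_equiv p' hodd' f hGood, horder]
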